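/- Steiner's formula for boxes in ℝ³: for the rectangular box A = [0,a] × [0,b] × [0,c] and any ρ > 0, λ₃(Tube(A,ρ)) = abc + 2ρ(ab+bc+ca) + πρ²(a+b+c) + (4π/3)ρ³. -/

import Mathlib

open MeasureTheory Real Set

/-- Tube of radius `ρ` around a set in `ℝ³`. -/
def Tube (A : Set (EuclideanSpace ℝ (Fin 3))) (ρ : ℝ) : Set (EuclideanSpace ℝ (Fin 3)) :=
  {x | ∃ y ∈ A, dist x y ≤ ρ}

/-- The box `[0,a] × [0,b] × [0,c]` in `ℝ³`. -/
def Box (a b c : ℝ) : Set (EuclideanSpace ℝ (Fin 3)) :=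
  {x | x 0 ∈ Set.Icc 0 a ∧ x 1 ∈ Set.Icc 0 b ∧ x 2 ∈ Set.Icc 0 c}


/-- distance from `t` to the interval `[0,L]`. -/
def gg (L t : ℝ) : ℝ := max (max (-t) (t - L)) 0

lemma gg_nonneg (L t : ℝ) : 0 ≤ gg L t := le_max_right _ _

lemma gg_le_iff {L t r : ℝ} (hr : 0 ≤ r) : gg L t ≤ r ↔ -r ≤ t ∧ t ≤ L + r := by
  unfold gg
  constructor
  · intro h
    rw [max_le_iff, max_le_iff] at h
    constructor <;> linarith [h.1.1, h.1.2]
  · intro ⟨h1, h2⟩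
    rw [max_le_iff, max_le_iff]
    exact ⟨⟨by linarith, by linarith⟩, hr⟩

lemma setOf_gg_sq_le {L r : ℝ} (hr : 0 ≤ r) :
    {t : ℝ | gg L t ^ 2 ≤ r ^ 2} = Icc (-r) (L + r) := by
  ext t
  rw [mem_setOf_eq, pow_le_pow_iff_left₀ (gg_nonneg L t) hr two_ne_zero, gg_le_iff hr,
    mem_Icc]

lemma continuous_gg (L : ℝ) : Continuous (gg L) := by
  unfold gg; fun_prop

lemma gg_of_nonpos {L t : ℝ} (hL : 0 ≤ L) (ht : t ≤ 0) : gg L t = -t := by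
  have h1 : max (-t) (t - L) = -t := max_eq_left (by linarith)
  rw [gg, h1, max_eq_left (by linarith)]

lemma gg_of_mem {L t : ℝ} (h0 : 0 ≤ t) (hL : t ≤ L) : gg L t = 0 := by
  unfold gg
  rw [max_eq_right]
  rw [max_le_iff]; constructor <;> linarith

lemma gg_of_ge {L t : ℝ} (hL : 0 ≤ L) (ht : L ≤ t) : gg L t = t - L := by
  have h1 : max (-t) (t - L) = t - L := max_eq_right (by linarith)
  rw [gg, h1, max_eq_left (by linarith)]

lemma vol1 {L r : ℝ} (hL : 0 ≤ L) (hr : 0 ≤ r) :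
    volume {t : ℝ | gg L t ^ 2 ≤ r ^ 2} = ENNReal.ofReal (L + 2 * r) := by
  rw [setOf_gg_sq_le hr, Real.volume_Icc]
  congr 1; ring

lemma integral_sqrt_quarter {r : ℝ} (hr : 0 ≤ r) :
    ∫ x in (0:ℝ)..r, √(r ^ 2 - x ^ 2) = π * r ^ 2 / 4 := by
  rcases eq_or_lt_of_le hr with h | h
  · simp [← h]
  have key : ∫ x in (-r:ℝ)..r, √(r ^ 2 - x ^ 2) = π * r ^ 2 / 2 := by
    have hsub := intervalIntegral.integral_comp_mul_left
      (fun x : ℝ => √(r ^ 2 - x ^ 2)) (ne_of_gt h) (a := -1) (b := 1)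
    simp only [mul_neg_one, mul_one] at hsub
    have heq : ∀ u : ℝ, √(r ^ 2 - (r * u) ^ 2) = r * √(1 - u ^ 2) := by
      intro u
      rw [show r ^ 2 - (r * u) ^ 2 = r ^ 2 * (1 - u ^ 2) by ring, Real.sqrt_mul (sq_nonneg r),
        Real.sqrt_sq hr]
    rw [intervalIntegral.integral_congr (fun u _ => heq u)] at hsub
    rw [intervalIntegral.integral_const_mul, integral_sqrt_one_sub_sq] at hsub
    have : (∫ x in (-r:ℝ)..r, √(r ^ 2 - x ^ 2)) = r * (r * (π / 2)) := by
      rw [smul_eq_mul] at hsub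
      field_simp at hsub
      linarith [hsub]
    rw [this]; ring
  have heven : ∫ x in (-r:ℝ)..0, √(r ^ 2 - x ^ 2) = ∫ x in (0:ℝ)..r, √(r ^ 2 - x ^ 2) := by
    have := intervalIntegral.integral_comp_neg (a := (0:ℝ)) (b := r)
      (fun x : ℝ => √(r ^ 2 - x ^ 2))
    simp only [neg_zero, neg_neg, neg_sq] at this
    exact this.symm
  have hsplit : (∫ x in (-r:ℝ)..0, √(r ^ 2 - x ^ 2)) + ∫ x in (0:ℝ)..r, √(r ^ 2 - x ^ 2)
      = ∫ x in (-r:ℝ)..r, √(r ^ 2 - x ^ 2) := by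
    apply intervalIntegral.integral_add_adjacent_intervals <;>
      exact (Continuous.intervalIntegrable (by fun_prop) _ _)
  rw [heven, key] at hsplit
  linarith

lemma integral_sqrt_quarter_neg {r : ℝ} (hr : 0 ≤ r) :
    ∫ x in (-r:ℝ)..0, √(r ^ 2 - x ^ 2) = π * r ^ 2 / 4 := by
  have := intervalIntegral.integral_comp_neg (a := (0:ℝ)) (b := r)
      (fun x : ℝ => √(r ^ 2 - x ^ 2))
  simp only [neg_zero, neg_neg, neg_sq] at this
  rw [← this, integral_sqrt_quarter hr]

lemma measurable_gg (L : ℝ) : Measurable (gg L) := (continuous_gg L).measurable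

lemma area2 {b c r : ℝ} (hb : 0 ≤ b) (hc : 0 ≤ c) (hr : 0 ≤ r) :
    volume {p : ℝ × ℝ | gg b p.1 ^ 2 + gg c p.2 ^ 2 ≤ r ^ 2}
      = ENNReal.ofReal (b * c + 2 * r * (b + c) + π * r ^ 2) := by
  set f : ℝ → ℝ := fun x => c + 2 * √(r ^ 2 - gg b x ^ 2) with hf
  have hcontf : Continuous f :=
    continuous_const.add (continuous_const.mul
      ((continuous_const.sub ((continuous_gg b).pow 2)).sqrt))
  have hmeas : MeasurableSet {p : ℝ × ℝ | gg b p.1 ^ 2 + gg c p.2 ^ 2 ≤ r ^ 2} := by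
    exact measurableSet_le
      ((((continuous_gg b).comp continuous_fst).pow 2).add
        (((continuous_gg c).comp continuous_snd).pow 2)).measurable measurable_const
  rw [Measure.volume_eq_prod, Measure.prod_apply hmeas]
  have slice : ∀ x : ℝ,
      volume (Prod.mk x ⁻¹' {p : ℝ × ℝ | gg b p.1 ^ 2 + gg c p.2 ^ 2 ≤ r ^ 2})
        = Set.indicator (Icc (-r) (b + r)) (fun x => ENNReal.ofReal (f x)) x := by
    intro x
    by_cases hx : gg b x ≤ r
    · have hx' : x ∈ Icc (-r) (b + r) := by
        rw [gg_le_iff hr] at hx; exact mem_Icc.mpr hx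
      rw [Set.indicator_of_mem hx']
      have h2 : 0 ≤ r ^ 2 - gg b x ^ 2 := by nlinarith [gg_nonneg b x]
      have hpre : Prod.mk x ⁻¹' {p : ℝ × ℝ | gg b p.1 ^ 2 + gg c p.2 ^ 2 ≤ r ^ 2}
          = {y : ℝ | gg c y ^ 2 ≤ (√(r ^ 2 - gg b x ^ 2)) ^ 2} := by
        ext y
        simp only [Set.mem_preimage, Set.mem_setOf_eq, Real.sq_sqrt h2]
        constructor <;> intro <;> linarith
      rw [hpre, vol1 hc (Real.sqrt_nonneg _)]
    · push_neg at hx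
      have hx' : x ∉ Icc (-r) (b + r) := by
        rw [mem_Icc, ← gg_le_iff hr]; exact not_le.mpr hx
      rw [Set.indicator_of_notMem hx']
      have hpre : Prod.mk x ⁻¹' {p : ℝ × ℝ | gg b p.1 ^ 2 + gg c p.2 ^ 2 ≤ r ^ 2} = ∅ := by
        ext y
        simp only [Set.mem_preimage, Set.mem_setOf_eq, Set.mem_empty_iff_false, iff_false,
          not_le]
        nlinarith [gg_nonneg b x, gg_nonneg c y, sq_nonneg (gg c y)]
      rw [hpre]; simp
  simp_rw [slice]
  rw [lintegral_indicator measurableSet_Icc]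
  rw [← ofReal_integral_eq_lintegral_ofReal (hcontf.integrableOn_Icc)
    (Filter.Eventually.of_forall fun x => add_nonneg hc (by positivity))]
  congr 1
  have hIcc : ∫ x in Icc (-r) (b + r), f x = ∫ x in (-r)..(b + r), f x := by
    rw [intervalIntegral.integral_of_le (by linarith), ← integral_Icc_eq_integral_Ioc]
  rw [hIcc]
  have ii : ∀ u v : ℝ, IntervalIntegrable f volume u v :=
    fun u v => hcontf.intervalIntegrable u v
  have split2 : (∫ x in (0:ℝ)..b, f x) + ∫ x in b..(b + r), f x = ∫ x in (0:ℝ)..(b + r), f x :=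
    intervalIntegral.integral_add_adjacent_intervals (ii _ _) (ii _ _)
  have split1 : (∫ x in (-r:ℝ)..0, f x) + ∫ x in (0:ℝ)..(b + r), f x
      = ∫ x in (-r:ℝ)..(b + r), f x :=
    intervalIntegral.integral_add_adjacent_intervals (ii _ _) (ii _ _)
  have hsqrtcont : Continuous fun x : ℝ => 2 * √(r ^ 2 - x ^ 2) := by fun_prop
  have pieceA : ∫ x in (-r:ℝ)..0, f x = c * r + π * r ^ 2 / 2 := by
    have hcongr : ∫ x in (-r:ℝ)..0, f x = ∫ x in (-r:ℝ)..0, (c + 2 * √(r ^ 2 - x ^ 2)) := by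
      apply intervalIntegral.integral_congr
      intro x hx
      rw [uIcc_of_le (by linarith)] at hx
      simp only [hf]
      rw [gg_of_nonpos hb hx.2, neg_sq]
    rw [hcongr, intervalIntegral.integral_add (intervalIntegrable_const)
      (hsqrtcont.intervalIntegrable _ _), intervalIntegral.integral_const,
      intervalIntegral.integral_const_mul, integral_sqrt_quarter_neg hr]
    simp only [sub_neg_eq_add, zero_add, smul_eq_mul]
    ring
  have pieceB : ∫ x in (0:ℝ)..b, f x = b * (c + 2 * r) := by
    have hcongr : ∫ x in (0:ℝ)..b, f x = ∫ x in (0:ℝ)..b, (fun _ : ℝ => c + 2 * r) x := by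
      apply intervalIntegral.integral_congr
      intro x hx
      rw [uIcc_of_le hb] at hx
      simp only [hf]
      rw [gg_of_mem hx.1 hx.2]
      norm_num
      rw [Real.sqrt_sq hr]
    rw [hcongr, intervalIntegral.integral_const]
    simp only [sub_zero, smul_eq_mul]
  have pieceC : ∫ x in b..(b + r), f x = c * r + π * r ^ 2 / 2 := by
    have hcongr : ∫ x in b..(b + r), f x
        = ∫ x in b..(b + r), (fun x => c + 2 * √(r ^ 2 - x ^ 2)) (x - b) := by
      apply intervalIntegral.integral_congr
      intro x hx
      rw [uIcc_of_le (by linarith)] at hx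
      simp only [hf]
      rw [gg_of_ge hb hx.1]
    rw [hcongr, intervalIntegral.integral_comp_sub_right (fun x => c + 2 * √(r ^ 2 - x ^ 2)) b]
    have h0 : b - b = 0 := by ring
    have h1 : b + r - b = r := by ring
    rw [h0, h1, intervalIntegral.integral_add (intervalIntegrable_const)
      (hsqrtcont.intervalIntegrable _ _), intervalIntegral.integral_const,
      intervalIntegral.integral_const_mul, integral_sqrt_quarter hr]
    simp only [sub_zero, smul_eq_mul]
    ring
  rw [← split1, ← split2, pieceA, pieceB, pieceC]
  ring

lemma integral_quad (r u v : ℝ) :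
    ∫ x in u..v, (r ^ 2 - x ^ 2) = r ^ 2 * (v - u) - (v ^ 3 - u ^ 3) / 3 := by
  rw [intervalIntegral.integral_sub intervalIntegrable_const
    (Continuous.intervalIntegrable (by fun_prop) _ _), intervalIntegral.integral_const,
    integral_pow]
  norm_num
  ring

lemma vol3 {a b c ρ : ℝ} (ha : 0 ≤ a) (hb : 0 ≤ b) (hc : 0 ≤ c) (hρ : 0 ≤ ρ) :
    volume {p : ℝ × ℝ × ℝ | gg a p.1 ^ 2 + gg b p.2.1 ^ 2 + gg c p.2.2 ^ 2 ≤ ρ ^ 2}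
      = ENNReal.ofReal (a * b * c + 2 * ρ * (a * b + b * c + c * a) + π * ρ ^ 2 * (a + b + c)
          + (4 * π / 3) * ρ ^ 3) := by
  set f : ℝ → ℝ :=
    fun x => b * c + 2 * √(ρ ^ 2 - gg a x ^ 2) * (b + c) + π * (ρ ^ 2 - gg a x ^ 2) with hf
  have hga : Continuous fun x : ℝ => ρ ^ 2 - gg a x ^ 2 :=
    continuous_const.sub ((continuous_gg a).pow 2)
  have hcontf : Continuous f :=
    (continuous_const.add ((continuous_const.mul hga.sqrt).mul continuous_const)).add
      (continuous_const.mul hga)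
  have hmeas : MeasurableSet
      {p : ℝ × ℝ × ℝ | gg a p.1 ^ 2 + gg b p.2.1 ^ 2 + gg c p.2.2 ^ 2 ≤ ρ ^ 2} := by
    exact measurableSet_le
      (((((continuous_gg a).comp continuous_fst).pow 2).add
        (((continuous_gg b).comp (continuous_fst.comp continuous_snd)).pow 2)).add
        (((continuous_gg c).comp (continuous_snd.comp continuous_snd)).pow 2)).measurable
        measurable_const
  rw [Measure.volume_eq_prod, Measure.prod_apply hmeas]
  have slice : ∀ x : ℝ,
      volume (Prod.mk x ⁻¹' {p : ℝ × ℝ × ℝ |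
          gg a p.1 ^ 2 + gg b p.2.1 ^ 2 + gg c p.2.2 ^ 2 ≤ ρ ^ 2})
        = Set.indicator (Icc (-ρ) (a + ρ)) (fun x => ENNReal.ofReal (f x)) x := by
    intro x
    by_cases hx : gg a x ≤ ρ
    · have hx' : x ∈ Icc (-ρ) (a + ρ) := by
        rw [gg_le_iff hρ] at hx; exact mem_Icc.mpr hx
      rw [Set.indicator_of_mem hx']
      have h2 : 0 ≤ ρ ^ 2 - gg a x ^ 2 := by nlinarith [gg_nonneg a x]
      have hpre : Prod.mk x ⁻¹' {p : ℝ × ℝ × ℝ |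
          gg a p.1 ^ 2 + gg b p.2.1 ^ 2 + gg c p.2.2 ^ 2 ≤ ρ ^ 2}
          = {q : ℝ × ℝ | gg b q.1 ^ 2 + gg c q.2 ^ 2 ≤ (√(ρ ^ 2 - gg a x ^ 2)) ^ 2} := by
        ext q
        simp only [Set.mem_preimage, Set.mem_setOf_eq, Real.sq_sqrt h2]
        constructor <;> intro <;> linarith
      rw [hpre, area2 hb hc (Real.sqrt_nonneg _), Real.sq_sqrt h2]
    · push_neg at hx
      have hx' : x ∉ Icc (-ρ) (a + ρ) := by
        rw [mem_Icc, ← gg_le_iff hρ]; exact not_le.mpr hx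
      rw [Set.indicator_of_notMem hx']
      have hpre : Prod.mk x ⁻¹' {p : ℝ × ℝ × ℝ |
          gg a p.1 ^ 2 + gg b p.2.1 ^ 2 + gg c p.2.2 ^ 2 ≤ ρ ^ 2} = ∅ := by
        ext q
        simp only [Set.mem_preimage, Set.mem_setOf_eq, Set.mem_empty_iff_false, iff_false,
          not_le]
        nlinarith [gg_nonneg a x, gg_nonneg b q.1, gg_nonneg c q.2]
      rw [hpre]; simp
  simp_rw [slice]
  rw [lintegral_indicator measurableSet_Icc]
  have hnn : 0 ≤ᵐ[volume.restrict (Icc (-ρ) (a + ρ))] f := by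
    show ∀ᵐ x ∂(volume.restrict (Icc (-ρ) (a + ρ))), 0 ≤ f x
    rw [ae_restrict_iff' measurableSet_Icc]
    apply Filter.Eventually.of_forall
    intro x hx
    rw [mem_Icc, ← gg_le_iff hρ] at hx
    have h2 : 0 ≤ ρ ^ 2 - gg a x ^ 2 := by nlinarith [gg_nonneg a x]
    have := Real.sqrt_nonneg (ρ ^ 2 - gg a x ^ 2)
    have hπ := Real.pi_nonneg
    simp only [hf]
    positivity
  rw [← ofReal_integral_eq_lintegral_ofReal (hcontf.integrableOn_Icc) hnn]
  congr 1
  have hIcc : ∫ x in Icc (-ρ) (a + ρ), f x = ∫ x in (-ρ)..(a + ρ), f x := by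
    rw [intervalIntegral.integral_of_le (by linarith), ← integral_Icc_eq_integral_Ioc]
  rw [hIcc]
  have ii : ∀ u v : ℝ, IntervalIntegrable f volume u v :=
    fun u v => hcontf.intervalIntegrable u v
  have split2 : (∫ x in (0:ℝ)..a, f x) + ∫ x in a..(a + ρ), f x = ∫ x in (0:ℝ)..(a + ρ), f x :=
    intervalIntegral.integral_add_adjacent_intervals (ii _ _) (ii _ _)
  have split1 : (∫ x in (-ρ:ℝ)..0, f x) + ∫ x in (0:ℝ)..(a + ρ), f x
      = ∫ x in (-ρ:ℝ)..(a + ρ), f x :=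
    intervalIntegral.integral_add_adjacent_intervals (ii _ _) (ii _ _)
  set F : ℝ → ℝ := fun x => b * c + 2 * √(ρ ^ 2 - x ^ 2) * (b + c) + π * (ρ ^ 2 - x ^ 2) with hF
  have hFcont : Continuous F :=
    (continuous_const.add ((continuous_const.mul
      (continuous_const.sub (continuous_pow 2)).sqrt).mul continuous_const)).add
      (continuous_const.mul (continuous_const.sub (continuous_pow 2)))
  have hFint : ∀ u v : ℝ, ∫ x in u..v, F x
      = b * c * (v - u) + 2 * (b + c) * (∫ x in u..v, √(ρ ^ 2 - x ^ 2))
        + π * (ρ ^ 2 * (v - u) - (v ^ 3 - u ^ 3) / 3) := by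
    intro u v
    have h1 : IntervalIntegrable (fun x : ℝ => b * c) volume u v := intervalIntegrable_const
    have h2 : IntervalIntegrable (fun x : ℝ => 2 * √(ρ ^ 2 - x ^ 2) * (b + c)) volume u v :=
      Continuous.intervalIntegrable (by fun_prop) _ _
    have h3 : IntervalIntegrable (fun x : ℝ => π * (ρ ^ 2 - x ^ 2)) volume u v :=
      Continuous.intervalIntegrable (by fun_prop) _ _
    rw [hF]
    rw [intervalIntegral.integral_add (h1.add h2) h3, intervalIntegral.integral_add h1 h2,
      intervalIntegral.integral_const, intervalIntegral.integral_const_mul,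
      intervalIntegral.integral_mul_const, intervalIntegral.integral_const_mul, integral_quad]
    simp only [smul_eq_mul]
    ring
  have pieceA : ∫ x in (-ρ:ℝ)..0, f x
      = b * c * ρ + (b + c) * (π * ρ ^ 2 / 2) + π * (2 / 3 * ρ ^ 3) := by
    have hcongr : ∫ x in (-ρ:ℝ)..0, f x = ∫ x in (-ρ:ℝ)..0, F x := by
      apply intervalIntegral.integral_congr
      intro x hx
      rw [uIcc_of_le (by linarith)] at hx
      simp only [hf, hF]
      rw [gg_of_nonpos ha hx.2, neg_sq]
    rw [hcongr, hFint, integral_sqrt_quarter_neg hρ]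
    ring
  have pieceB : ∫ x in (0:ℝ)..a, f x = a * (b * c + 2 * ρ * (b + c) + π * ρ ^ 2) := by
    have hcongr : ∫ x in (0:ℝ)..a, f x
        = ∫ x in (0:ℝ)..a, (fun _ : ℝ => b * c + 2 * ρ * (b + c) + π * ρ ^ 2) x := by
      apply intervalIntegral.integral_congr
      intro x hx
      rw [uIcc_of_le ha] at hx
      simp only [hf]
      rw [gg_of_mem hx.1 hx.2]
      rw [show (0:ℝ) ^ 2 = 0 by norm_num, sub_zero, Real.sqrt_sq hρ]
    rw [hcongr, intervalIntegral.integral_const]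
    simp only [sub_zero, smul_eq_mul]
  have pieceC : ∫ x in a..(a + ρ), f x
      = b * c * ρ + (b + c) * (π * ρ ^ 2 / 2) + π * (2 / 3 * ρ ^ 3) := by
    have hcongr : ∫ x in a..(a + ρ), f x = ∫ x in a..(a + ρ), F (x - a) := by
      apply intervalIntegral.integral_congr
      intro x hx
      rw [uIcc_of_le (by linarith)] at hx
      simp only [hf, hF]
      rw [gg_of_ge ha hx.1]
    rw [hcongr, intervalIntegral.integral_comp_sub_right F a]
    have h0 : a - a = 0 := by ring
    have h1 : a + ρ - a = ρ := by ring
    rw [h0, h1, hFint, integral_sqrt_quarter hρ]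
    ring
  rw [← split1, ← split2, pieceA, pieceB, pieceC]
  ring

def clampF (L t : ℝ) : ℝ := max 0 (min t L)

lemma clampF_mem {L : ℝ} (t : ℝ) (hL : 0 ≤ L) : clampF L t ∈ Icc 0 L := by
  unfold clampF
  constructor
  · exact le_max_left _ _
  · rw [max_le_iff]
    exact ⟨hL, min_le_right _ _⟩

lemma abs_sub_clampF {L t : ℝ} (hL : 0 ≤ L) : |t - clampF L t| = gg L t := by
  unfold clampF
  rcases le_or_gt t 0 with h | h
  · rw [min_eq_left (by linarith), max_eq_left (by linarith), sub_zero,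
      abs_of_nonpos h, gg_of_nonpos hL h]
  · rcases le_or_gt t L with h2 | h2
    · rw [min_eq_left h2, max_eq_right h.le, sub_self, abs_zero, gg_of_mem h.le h2]
    · rw [min_eq_right h2.le, max_eq_right hL, abs_of_nonneg (by linarith),
        gg_of_ge hL h2.le]

lemma gg_le_abs {L t y : ℝ} (hy : y ∈ Icc 0 L) : gg L t ≤ |t - y| := by
  unfold gg
  rw [max_le_iff, max_le_iff]
  refine ⟨⟨?_, ?_⟩, abs_nonneg _⟩
  · have : -(t - y) ≤ |t - y| := neg_le_abs _
    have := hy.1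
    linarith
  · have : t - y ≤ |t - y| := le_abs_self _
    have := hy.2
    linarith

lemma tube_eq {a b c ρ : ℝ} (ha : 0 ≤ a) (hb : 0 ≤ b) (hc : 0 ≤ c) (hρ : 0 ≤ ρ) :
    Tube (Box a b c) ρ
      = {x : EuclideanSpace ℝ (Fin 3) |
          gg a (x 0) ^ 2 + gg b (x 1) ^ 2 + gg c (x 2) ^ 2 ≤ ρ ^ 2} := by
  ext x
  simp only [Tube, Box, mem_setOf_eq]
  constructor
  · rintro ⟨y, ⟨hy0, hy1, hy2⟩, hd⟩
    have hdist : dist x y = √(∑ i, dist (x i) (y i) ^ 2) := EuclideanSpace.dist_eq x y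
    have hnn : 0 ≤ ∑ i, dist (x i) (y i) ^ 2 := Finset.sum_nonneg fun i _ => sq_nonneg _
    have hsum : gg a (x 0) ^ 2 + gg b (x 1) ^ 2 + gg c (x 2) ^ 2
        ≤ ∑ i, dist (x i) (y i) ^ 2 := by
      rw [Fin.sum_univ_three]
      have h0 : gg a (x 0) ≤ dist (x 0) (y 0) := by
        rw [Real.dist_eq]; exact gg_le_abs hy0
      have h1 : gg b (x 1) ≤ dist (x 1) (y 1) := by
        rw [Real.dist_eq]; exact gg_le_abs hy1
      have h2 : gg c (x 2) ≤ dist (x 2) (y 2) := by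
        rw [Real.dist_eq]; exact gg_le_abs hy2
      have g0 := gg_nonneg a (x 0); have g1 := gg_nonneg b (x 1); have g2 := gg_nonneg c (x 2)
      nlinarith
    have hle : (∑ i, dist (x i) (y i) ^ 2) ≤ ρ ^ 2 := by
      have h1 : √(∑ i, dist (x i) (y i) ^ 2) ≤ ρ := hdist ▸ hd
      have h2 : (√(∑ i, dist (x i) (y i) ^ 2)) ^ 2 ≤ ρ ^ 2 :=
        pow_le_pow_left₀ (Real.sqrt_nonneg _) h1 2
      rwa [Real.sq_sqrt hnn] at h2
    linarith
  · intro h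
    set y : EuclideanSpace ℝ (Fin 3) :=
      (WithLp.equiv 2 (Fin 3 → ℝ)).symm ![clampF a (x 0), clampF b (x 1), clampF c (x 2)]
      with hy
    have hy0 : y 0 = clampF a (x 0) := rfl
    have hy1 : y 1 = clampF b (x 1) := rfl
    have hy2 : y 2 = clampF c (x 2) := rfl
    refine ⟨y, ⟨?_, ?_, ?_⟩, ?_⟩
    · rw [hy0]; exact clampF_mem _ ha
    · rw [hy1]; exact clampF_mem _ hb
    · rw [hy2]; exact clampF_mem _ hc
    · rw [EuclideanSpace.dist_eq, Fin.sum_univ_three, hy0, hy1, hy2, Real.dist_eq,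
        Real.dist_eq, Real.dist_eq, abs_sub_clampF ha, abs_sub_clampF hb, abs_sub_clampF hc]
      calc √(gg a (x 0) ^ 2 + gg b (x 1) ^ 2 + gg c (x 2) ^ 2) ≤ √(ρ ^ 2) :=
            Real.sqrt_le_sqrt h
        _ = ρ := Real.sqrt_sq hρ

/-- Steiner's formula for rectangular boxes in `ℝ³`. -/
theorem steiner_box (a b c : ℝ) (ha : 0 < a) (hb : 0 < b) (hc : 0 < c)
    (ρ : ℝ) (hρ : 0 < ρ) :
    (volume (Tube (Box a b c) ρ)).toReal =
      a * b * c + 2 * ρ * (a * b + b * c + c * a) + π * ρ ^ 2 * (a + b + c)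
        + (4 * π / 3) * ρ ^ 3 := by
  have hT3 : MeasurableSet
      {p : ℝ × ℝ × ℝ | gg a p.1 ^ 2 + gg b p.2.1 ^ 2 + gg c p.2.2 ^ 2 ≤ ρ ^ 2} :=
    measurableSet_le
      (((((continuous_gg a).comp continuous_fst).pow 2).add
        (((continuous_gg b).comp (continuous_fst.comp continuous_snd)).pow 2)).add
        (((continuous_gg c).comp (continuous_snd.comp continuous_snd)).pow 2)).measurable
        measurable_const
  have mp : MeasurePreserving
      (fun x : EuclideanSpace ℝ (Fin 3) => ((x 0 : ℝ), (x 1, x 2))) volume volume := by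
    have mp1 := EuclideanSpace.volume_preserving_symm_measurableEquiv_toLp (Fin 3)
    have mp2 := volume_preserving_piFinSuccAbove (fun _ : Fin 3 => ℝ) 0
    have mp3 : MeasurePreserving ((MeasurableEquiv.refl ℝ).prodCongr
        (MeasurableEquiv.piFinTwo fun _ : Fin 2 => ℝ))
        (volume : Measure (ℝ × (Fin 2 → ℝ))) volume :=
      (MeasurePreserving.id volume).prod (volume_preserving_piFinTwo _)
    exact (mp3.comp (mp2.comp mp1) : _)
  have hpre : Tube (Box a b c) ρ
      = (fun x : EuclideanSpace ℝ (Fin 3) => ((x 0 : ℝ), (x 1, x 2))) ⁻¹'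
        {p : ℝ × ℝ × ℝ | gg a p.1 ^ 2 + gg b p.2.1 ^ 2 + gg c p.2.2 ^ 2 ≤ ρ ^ 2} := by
    rw [tube_eq ha.le hb.le hc.le hρ.le]
    rfl
  rw [hpre, mp.measure_preimage hT3.nullMeasurableSet,
    vol3 ha.le hb.le hc.le hρ.le, ENNReal.toReal_ofReal]
  have hπ := Real.pi_pos
  positivity
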